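/- Let q = 2n+1 be an odd prime power. Then R_q(χ_q) is independent of the choice of the generator χ_q: for any two generators χ and χ' of the group of multiplicative characters of F_q, one has R_q(χ) = R_q(χ'). -/

import Mathlib

open Finset

private lemma jacobi_refl {F : Type*} [Field F] [Fintype F] (χ ψ : MulChar F ℂ) :
    jacobiSum χ ψ = ψ (-1) * jacobiSum (χ * ψ)⁻¹ ψ := by
  rw [jacobiSum, jacobiSum, Finset.mul_sum]
  refine Fintype.sum_bijective _ inv_involutive.bijective _ _ fun x => ?_
  rcases eq_or_ne x 0 with rfl | hx
  · rw [inv_zero, MulChar.map_nonunit χ not_isUnit_zero,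
      MulChar.map_nonunit (χ*ψ)⁻¹ not_isUnit_zero]
    ring
  · have hψx : ψ x ≠ 0 := by
      have h : ψ x * ψ x⁻¹ = 1 := by rw [← map_mul, mul_inv_cancel₀ hx, map_one]
      exact left_ne_zero_of_mul_eq_one h
    have hsq : ψ (-1) * ψ (-1) = 1 := by rw [← map_mul]; norm_num
    have h0 : (χ * ψ)⁻¹ x⁻¹ = χ x * ψ x := by
      rw [MulChar.inv_apply', inv_inv, MulChar.mul_apply]
    have hψi : ψ x⁻¹ = (ψ x)⁻¹ := by rw [← MulChar.inv_apply', MulChar.inv_apply_eq_inv']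
    have h1 : ψ (1 - x⁻¹) = ψ (-1) * ψ (1 - x) * (ψ x)⁻¹ := by
      rw [show (1:F) - x⁻¹ = (-1) * (1-x) * x⁻¹ by field_simp; ring, map_mul, map_mul, hψi]
    rw [h0, h1]
    have : ψ (-1) * (χ x * ψ x * (ψ (-1) * ψ (1 - x) * (ψ x)⁻¹)) =
        (ψ (-1) * ψ (-1)) * (ψ x * (ψ x)⁻¹) * (χ x * ψ (1 - x)) := by ring
    rw [this, hsq, mul_inv_cancel₀ hψx, one_mul, one_mul]

theorem stmt_1 {F : Type*} [Field F] [Fintype F] (n : ℕ)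
    (hcard : Fintype.card F = 2 * n + 1)
    (φ χ χ' : MulChar F ℂ)
    (hφ : φ ^ 2 = 1 ∧ φ ≠ 1)
    (hχ : ∀ ψ : MulChar F ℂ, ψ ∈ Subgroup.zpowers χ)
    (hχ' : ∀ ψ : MulChar F ℂ, ψ ∈ Subgroup.zpowers χ') :
    (∏ k ∈ (Finset.range n).filter (fun k => 0 < k ∧ 2 * k < n),
        (jacobiSum φ (χ ^ k) + jacobiSum φ (χ ^ (-(k : ℤ))))) =
      (∏ k ∈ (Finset.range n).filter (fun k => 0 < k ∧ 2 * k < n),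
        (jacobiSum φ (χ' ^ k) + jacobiSum φ (χ' ^ (-(k : ℤ))))) := by
  classical
  have hn1 : 1 ≤ n := by
    by_contra h
    have := Fintype.one_lt_card (α := F)
    omega
  -- cardinality of the character group
  have hNcard : Nat.card (MulChar F ℂ) = 2 * n := by
    have hexp : NeZero (Monoid.exponent Fˣ) := ⟨Monoid.exponent_ne_zero_of_finite⟩
    rw [MulChar.card_eq_card_units_of_hasEnoughRootsOfUnity, Nat.card_eq_fintype_card,
      Fintype.card_units, hcard]
    omega
  have horder : orderOf χ = 2 * n := by
    rw [orderOf_eq_card_of_forall_mem_zpowers hχ, hNcard]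
  have horder' : orderOf χ' = 2 * n := by
    rw [orderOf_eq_card_of_forall_mem_zpowers hχ', hNcard]
  -- χ' = χ ^ m with m coprime to 2n
  obtain ⟨j, hj0⟩ := hχ χ'
  have hj : χ ^ j = χ' := hj0
  set m : ℕ := (j % (2 * n : ℕ)).toNat with hm_def
  have hmχ : χ ^ m = χ' := by
    have h1 : χ ^ (j % ((2 * n : ℕ) : ℤ)) = χ ^ j := by
      have := zpow_mod_orderOf χ j
      rw [horder] at this
      exact_mod_cast this
    rw [← hj, ← h1, hm_def, ← zpow_natCast,
      Int.toNat_of_nonneg (Int.emod_nonneg _ (Int.natCast_ne_zero.mpr (by omega)))]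
  have hco : Nat.Coprime m (2 * n) := by
    have h1 : orderOf (χ ^ m) = 2 * n := by rw [hmχ, horder']
    rw [orderOf_pow, horder] at h1
    have hg : Nat.gcd (2*n) m ∣ 2 * n := Nat.gcd_dvd_left _ _
    have h2 := Nat.div_mul_cancel hg
    rw [h1] at h2
    have h3 : Nat.gcd (2*n) m = 1 := by
      rcases Nat.eq_zero_or_pos (Nat.gcd (2*n) m) with h | h
      · rw [Nat.gcd_eq_zero_iff] at h
        omega
      · nlinarith
    exact Nat.coprime_comm.mp h3
  have hm2 : m % 2 = 1 := by
    rcases Nat.even_or_odd m with he | ho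
    · exfalso
      obtain ⟨c, hc⟩ := he
      have h2 : (2:ℕ) ∣ Nat.gcd m (2*n) := Nat.dvd_gcd ⟨c, by omega⟩ ⟨n, rfl⟩
      rw [hco] at h2
      omega
    · exact Nat.odd_iff.mp ho
  have hconm : Nat.Coprime n m :=
    ((Nat.Coprime.coprime_dvd_right ⟨2, by ring⟩ hco)).symm
  -- φ = χ ^ n
  have hχ2n : χ ^ (2*n) = 1 := by rw [← horder]; exact pow_orderOf_eq_one χ
  have hρ2 : (χ ^ n) ^ 2 = 1 := by rw [← pow_mul, show n*2 = 2*n by ring, hχ2n]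
  have hρi : ∀ s : ℤ, (χ ^ n) ^ (2*s) = 1 := fun s => by
    rw [zpow_mul, show ((2:ℤ)) = ((2:ℕ):ℤ) by norm_num, zpow_natCast, hρ2, one_zpow]
  have hφn : χ ^ n = φ := by
    obtain ⟨i, hi0⟩ := hχ φ
    have hi : χ ^ i = φ := hi0
    have h2i : χ ^ (2 * i) = 1 := by
      rw [two_mul, zpow_add, hi, ← sq, hφ.1]
    have hdvd : ((2 * n : ℕ) : ℤ) ∣ 2 * i := by
      rw [← horder]
      exact orderOf_dvd_iff_zpow_eq_one.mpr h2i
    obtain ⟨t, ht⟩ := hdvd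
    have hit : i = (n:ℤ) * t := by
      push_cast at ht
      linarith
    have hρt : χ ^ i = (χ ^ n) ^ t := by
      rw [hit, zpow_mul, zpow_natCast]
    rcases Int.even_or_odd t with ⟨s, hs⟩ | ⟨s, hs⟩
    · exfalso
      apply hφ.2
      rw [← hi, hρt, hs, show s + s = 2*s by ring, hρi]
    · rw [← hi, hρt, hs, zpow_add, hρi, one_mul, zpow_one]
  -- sign facts
  have hsq : φ (-1) * φ (-1) = 1 := by rw [← map_mul]; norm_num
  have hsqp : φ (-1) ^ 2 = 1 := by rw [sq]; exact hsq
  have hφinv : φ⁻¹ = φ := by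
    rw [inv_eq_iff_mul_eq_one, ← sq, hφ.1]
  -- the function G and its transformation properties
  set G : MulChar F ℂ → ℂ := fun ρ => jacobiSum φ ρ + jacobiSum φ ρ⁻¹ with hGdef
  have hGinv : ∀ ρ, G ρ⁻¹ = G ρ := fun ρ => by
    simp only [hGdef, inv_inv]; ring
  have hJ : ∀ ρ : MulChar F ℂ, jacobiSum φ ρ = φ (-1) * jacobiSum φ (φ * ρ⁻¹) := by
    intro ρ
    calc jacobiSum φ ρ = jacobiSum ρ φ := jacobiSum_comm _ _
    _ = φ (-1) * jacobiSum (ρ * φ)⁻¹ φ := jacobi_refl _ _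
    _ = φ (-1) * jacobiSum φ (ρ * φ)⁻¹ := by rw [jacobiSum_comm]
    _ = φ (-1) * jacobiSum φ (φ * ρ⁻¹) := by rw [mul_inv, hφinv, mul_comm ρ⁻¹ φ]
  have hGmul : ∀ ρ, G (φ * ρ) = φ (-1) * G ρ := by
    intro ρ
    have e1 : jacobiSum φ (φ * ρ) = φ (-1) * jacobiSum φ ρ⁻¹ := by
      have h := hJ ρ⁻¹
      rw [inv_inv] at h
      rw [h, ← mul_assoc, hsq, one_mul]
    have e2 : jacobiSum φ (φ * ρ)⁻¹ = φ (-1) * jacobiSum φ ρ := by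
      have h' : (φ * ρ)⁻¹ = φ * ρ⁻¹ := by rw [mul_inv, hφinv]
      rw [h', ← one_mul (jacobiSum φ (φ * ρ⁻¹)), ← hsq, mul_assoc, ← hJ ρ]
    simp only [hGdef]
    rw [e1, e2]
    ring
  have hGpow : ∀ (q : ℕ) (ρ), G (φ ^ q * ρ) = φ (-1) ^ q * G ρ := by
    intro q
    induction q with
    | zero => intro ρ; simp
    | succ q ih =>
      intro ρ
      rw [pow_succ, pow_succ, mul_assoc, ih (φ * ρ), hGmul]
      ring
  -- the index set and folding map
  set S : Finset ℕ := (Finset.range n).filter (fun k => 0 < k ∧ 2 * k < n) with hSdef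
  set f : ℕ → ℕ := fun k => min (m * k % n) (n - m * k % n) with hfdef
  have hn0 : 0 < n := hn1
  -- basic facts about a = m*k % n for k ∈ S
  have hak : ∀ k ∈ S, (m * k % n ≠ 0 ∧ 2 * (m * k % n) ≠ n ∧ m * k % n < n) := by
    intro k hk
    rw [hSdef, Finset.mem_filter, Finset.mem_range] at hk
    obtain ⟨hkn, hk0, hk2⟩ := hk
    refine ⟨?_, ?_, Nat.mod_lt _ hn0⟩
    · intro h
      have hdvd : n ∣ m * k := Nat.dvd_of_mod_eq_zero h
      have : n ∣ k := (Nat.Coprime.dvd_of_dvd_mul_left hconm hdvd)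
      have := Nat.le_of_dvd hk0 this
      omega
    · intro h
      have hdvd : n ∣ m * (2 * k) := by
        refine ⟨2 * (m * k / n) + 1, ?_⟩
        have := Nat.div_add_mod (m * k) n
        ring_nf
        ring_nf at this
        omega
      have : n ∣ 2 * k := Nat.Coprime.dvd_of_dvd_mul_left hconm hdvd
      have := Nat.le_of_dvd (by omega) this
      omega
  have hfS : ∀ k ∈ S, f k ∈ S := by
    intro k hk
    obtain ⟨h0, h2, hlt⟩ := hak k hk
    rw [hSdef, Finset.mem_filter, Finset.mem_range]
    simp only [hfdef]
    omega
  have hfinj : ∀ k ∈ S, ∀ k' ∈ S, f k = f k' → k = k' := by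
    intro k hk k' hk'
    obtain ⟨h0, h2, hlt⟩ := hak k hk
    obtain ⟨h0', h2', hlt'⟩ := hak k' hk'
    rw [hSdef, Finset.mem_filter, Finset.mem_range] at hk hk'
    intro hf
    simp only [hfdef] at hf
    have hcase : m * k % n = m * k' % n ∨ m * k % n + m * k' % n = n := by omega
    rcases hcase with h | h
    · have hmod : m * k ≡ m * k' [MOD n] := h
      have := (Nat.ModEq.cancel_left_of_coprime hconm hmod)
      have hkk : k % n = k' % n := this
      rw [Nat.mod_eq_of_lt (by omega), Nat.mod_eq_of_lt (by omega)] at hkk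
      exact hkk
    · exfalso
      have hdvd : n ∣ m * (k + k') := by
        have e1 := Nat.div_add_mod (m * k) n
        have e2 := Nat.div_add_mod (m * k') n
        refine ⟨m * k / n + m * k' / n + 1, ?_⟩
        ring_nf
        ring_nf at e1 e2
        omega
      have : n ∣ k + k' := Nat.Coprime.dvd_of_dvd_mul_left hconm hdvd
      have := Nat.le_of_dvd (by omega) this
      omega
  have himg : S.image f = S := by
    apply Finset.eq_of_subset_of_card_le
    · intro x hx
      rw [Finset.mem_image] at hx
      obtain ⟨k, hk, rfl⟩ := hx
      exact hfS k hk
    · rw [Finset.card_image_of_injOn (fun x hx y hy => hfinj x hx y hy)]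
  -- the exponent function
  set e : ℕ → ℕ := fun k => m * k / n + (if n < 2 * (m * k % n) then 1 else 0) with hedef
  -- the key per-term identity
  have hkey : ∀ k ∈ S, G (χ' ^ k) = φ (-1) ^ (e k) * G (χ ^ (f k)) := by
    intro k hk
    obtain ⟨h0, h2, hlt⟩ := hak k hk
    have hdm := Nat.div_add_mod (m * k) n
    have hsplit : χ' ^ k = φ ^ (m * k / n) * χ ^ (m * k % n) := by
      rw [← hmχ, ← pow_mul, ← hφn, ← pow_mul, ← pow_add]
      congr 1
      omega
    rcases Nat.lt_or_ge (2 * (m * k % n)) n with hc | hc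
    · have hfk : f k = m * k % n := by simp only [hfdef]; omega
      have hek : e k = m * k / n := by simp only [hedef]; rw [if_neg (by omega)]; omega
      rw [hsplit, hGpow, hfk, hek]
    · have hgt : n < 2 * (m * k % n) := by omega
      have hfk : f k = n - m * k % n := by simp only [hfdef]; omega
      have hek : e k = m * k / n + 1 := by simp only [hedef]; rw [if_pos hgt]
      have hmulf : χ ^ (m * k % n) = φ * (χ ^ (f k))⁻¹ := by
        have h1 : χ ^ (m * k % n) * χ ^ (f k) = φ := by
          rw [← pow_add, hfk, show m * k % n + (n - m * k % n) = n by omega, hφn]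
        rw [← h1, mul_inv_cancel_right]
      rw [hsplit, hmulf, hGpow (m * k / n) (φ * (χ ^ f k)⁻¹)]
      rw [hGmul, hGinv, hek, pow_succ]
      ring
  -- the parity of ∑ e k
  have hsum_f : ∑ k ∈ S, f k = ∑ k ∈ S, k := by
    conv_rhs => rw [← himg]
    rw [Finset.sum_image (fun x hx y hy => hfinj x hx y hy)]
  have hprod_f : ∏ k ∈ S, G (χ ^ (f k)) = ∏ k ∈ S, G (χ ^ k) := by
    conv_rhs => rw [← himg]
    rw [Finset.prod_image (fun x hx y hy => hfinj x hx y hy)]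
  have hsign : φ (-1) ^ (∑ k ∈ S, e k) = 1 := by
    rcases Nat.even_or_odd n with hne | hno
    · -- n even : φ(-1) = 1
      obtain ⟨c, hc⟩ := hne
      have hφ1 : φ (-1) = 1 := by
        rw [← hφn, MulChar.pow_apply' χ (by omega), hc, show c + c = 2 * c by ring, pow_mul]
        have : χ (-1) ^ 2 = 1 := by
          rw [sq, ← map_mul]
          norm_num
        rw [this, one_pow]
      rw [hφ1, one_pow]
    · -- n odd : the sum is even
      have hn2 : n % 2 = 1 := Nat.odd_iff.mp hno
      have hpar : ∀ k ∈ S, e k % 2 = (k + f k) % 2 := by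
        intro k hk
        obtain ⟨h0, h2, hlt⟩ := hak k hk
        have hdm := Nat.div_add_mod (m * k) n
        simp only [hedef, hfdef]
        set M := m * k with hM
        set q := M / n with hq
        set a := M % n with ha
        have hdm2 : n * q + a = M := Nat.div_add_mod M n
        have hM2 : M % 2 = k % 2 := by rw [hM, Nat.mul_mod, hm2, one_mul]; omega
        have hq2 : (n * q) % 2 = q % 2 := by rw [Nat.mul_mod, hn2, one_mul]; omega
        split_ifs with hif
        · omega
        · omega
      have heven : (∑ k ∈ S, e k) % 2 = 0 := by
        rw [Finset.sum_nat_mod]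
        rw [Finset.sum_congr rfl hpar]
        rw [← Finset.sum_nat_mod, Finset.sum_add_distrib, hsum_f]
        omega
      obtain ⟨c, hc⟩ := (Nat.even_iff).mpr heven
      rw [hc, show c + c = 2 * c by ring, pow_mul, hsqp, one_pow]
  -- put everything together
  have hterm : ∀ (ρ : MulChar F ℂ) (k : ℕ),
      jacobiSum φ (ρ ^ k) + jacobiSum φ (ρ ^ (-(k:ℤ))) = G (ρ ^ k) := by
    intro ρ k
    have h : ρ ^ (-(k:ℤ)) = (ρ ^ k)⁻¹ := by
      rw [zpow_neg, zpow_natCast]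
    simp only [hGdef]
    rw [h]
  calc (∏ k ∈ S, (jacobiSum φ (χ ^ k) + jacobiSum φ (χ ^ (-(k : ℤ)))))
      = ∏ k ∈ S, G (χ ^ k) := Finset.prod_congr rfl fun k _ => hterm χ k
    _ = 1 * ∏ k ∈ S, G (χ ^ k) := (one_mul _).symm
    _ = φ (-1) ^ (∑ k ∈ S, e k) * ∏ k ∈ S, G (χ ^ (f k)) := by rw [hsign, hprod_f]
    _ = ∏ k ∈ S, (φ (-1) ^ (e k) * G (χ ^ (f k))) := by
        rw [Finset.prod_mul_distrib, Finset.prod_pow_eq_pow_sum]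
    _ = ∏ k ∈ S, G (χ' ^ k) := Finset.prod_congr rfl fun k hk => (hkey k hk).symm
    _ = ∏ k ∈ S, (jacobiSum φ (χ' ^ k) + jacobiSum φ (χ' ^ (-(k : ℤ)))) :=
        Finset.prod_congr rfl fun k _ => (hterm χ' k).symm
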